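/- Stochastic domination by a Bernoulli field. Let Q be a translation-invariant probability measure on Omega = {0,1}^{L^(l)} and let p := ess sup_omega Q(omega_0 = 1 | sigma-algebra generated by (omega_j)_{j different from 0})(omega). Let Q_p be the Bernoulli product measure on Omega with Q_p(omega_x = 1) = p for every x. Then Q is stochastically dominated by Q_p: for every bounded continuous increasing function f : Omega -> R, the expectation of f under Q is at most the expectation of f under Q_p. -/

import Mathlib

open MeasureTheory Real

/-! Multi-scale geometry of the bad region.

The rescaled lattice `L^(l) = (lℤ)²` is identified with `ℤ²` via the bijection
`i ↦ l·i`; under this identification the rescaled distance `d_l` on `L^(l)` becomes the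
ℓ¹ distance on `ℤ²`.  Accordingly, sites of `L^(l)` are represented by points of `ℤ²`
and all distances below are measured in units of `l`. -/

/-- Sites of the (rescaled) lattice. -/
abbrev Site : Type := ℤ × ℤ

/-- The ℓ¹ distance on the (rescaled) lattice, i.e. `d_l` in units of `l`. -/
def dist1 (x y : Site) : ℕ := (x.1 - y.1).natAbs + (x.2 - y.2).natAbs

/-- The space `Ω = {0,1}^{L^(l)}`; `true` encodes `1` (bad), `false` encodes `0` (good). -/
abbrev Omega : Type := Site → Bool

/-- The closed ball `B^(l)_r(x)` of (real) radius `r` around `x`. -/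
def ball1 (r : ℝ) (x : Site) : Set Site := {j | (dist1 x j : ℝ) ≤ r}

/-- `θ_k := ∑_{h=1}^k (Γ_h + γ_h)`. -/
noncomputable def thetaSeq (Γ γ : ℕ → ℝ) (k : ℕ) : ℝ := ∑ h ∈ Finset.Icc 1 k, (Γ h + γ h)

/-- `g` is a `k`-gentle atom for the bad set `B`: `g = B^(l)_{Γ_k}(x) ∩ B` for some `x ∈ B`,
`diam_l(g) ≤ Γ_k`, and `d_l(g, B \ g) > γ_k`. -/
def kAtom (Γ γ : ℕ → ℝ) (k : ℕ) (B : Set Site) (g : Set Site) : Prop :=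
  (∃ x ∈ B, g = ball1 (Γ k) x ∩ B) ∧
    (∀ x ∈ g, ∀ y ∈ g, (dist1 x y : ℝ) ≤ Γ k) ∧
    ∀ x ∈ g, ∀ y ∈ B \ g, γ k < (dist1 x y : ℝ)

/-- The union of all `k`-gentle atoms of the bad set `B`. -/
def gentleStep (Γ γ : ℕ → ℝ) (k : ℕ) (B : Set Site) : Set Site :=
  {y | ∃ g : Set Site, kAtom Γ γ k B g ∧ y ∈ g}

/-- The `k`-bad sites `BB_k(ω)`:  `BB_0(ω) = {i : ω_i = 1}` and
`BB_k(ω) = BB_{k-1}(ω) \ GG_k(ω)`. -/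
def BB (Γ γ : ℕ → ℝ) (ω : Omega) : ℕ → Set Site
  | 0 => {i | ω i = true}
  | k + 1 => BB Γ γ ω k \ gentleStep Γ γ (k + 1) (BB Γ γ ω k)

/-- The `k`-gentle sites `GG_k(ω)`:  `GG_0(ω) = {i : ω_i = 0}` and, for `k ≥ 1`,
`GG_k(ω)` is the union of the `k`-gentle atoms of `BB_{k-1}(ω)`. -/
def GG (Γ γ : ℕ → ℝ) (ω : Omega) : ℕ → Set Site
  | 0 => {i | ω i = false}
  | k + 1 => gentleStep Γ γ (k + 1) (BB Γ γ ω k)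

/-- The σ-algebra generated by the coordinates `ω_j` with `j ≠ 0`. -/
def extSigma : MeasurableSpace Omega :=
  MeasurableSpace.comap (fun (ω : Omega) (j : {j : Site // j ≠ 0}) => ω j) inferInstance

/-- A version of the conditional probability `Q(ω_0 = 1 | σ(ω_j, j ≠ 0))`. -/
noncomputable def condBadProb (Q : Measure Omega) : Omega → ℝ :=
  Q[Set.indicator {ω : Omega | ω 0 = true} (fun _ => (1 : ℝ)) | extSigma]

/-- The strength of the disorder: `p = ess sup_ω Q(ω_0 = 1 | σ(ω_j, j ≠ 0))(ω)`. -/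
noncomputable def badParam (Q : Measure Omega) : ℝ := essSup (condBadProb Q) Q

/-- Invariance of `Q` under all lattice translations of `L^(l)`. -/
def TransInvariant (Q : Measure Omega) : Prop :=
  ∀ v : Site, Measure.map (fun (ω : Omega) (x : Site) => ω (x + v)) Q = Q

/-- `a₀ := ∑_{k≥0} 2^{-k} log([2(Γ_{k+1}+γ_{k+1})+1]²)`. -/
noncomputable def aZero (Γ γ : ℕ → ℝ) : ℝ :=
  ∑' k : ℕ, (2 : ℝ) ^ (-(k : ℤ)) * Real.log ((2 * (Γ (k + 1) + γ (k + 1)) + 1) ^ 2)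

/-- `Qp` is the Bernoulli product measure on `Ω` with parameter `p`, characterized by its
cylinder probabilities. -/
def IsBernoulliProduct (p : ℝ) (Qp : Measure Omega) : Prop :=
  ∀ (S : Finset Site) (a : Site → Bool),
    Qp {ω : Omega | ∀ j ∈ S, ω j = a j} =
      ∏ j ∈ S, ENNReal.ofReal (if a j then p else 1 - p)

/-! ### Auxiliary material for the proof of stochastic domination -/

section StochDomAux

open Filter

/-- `f` depends only on the coordinates in the finite set `S`. -/
def DepOn (f : Omega → ℝ) (S : Finset Site) : Prop :=
  ∀ ω ω' : Omega, (∀ x ∈ S, ω x = ω' x) → f ω = f ω'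

/-- The configuration which is `true` exactly on `K`. -/
def patt (K : Finset Site) : Omega := fun y => decide (y ∈ K)

/-- The cylinder set of configurations agreeing with `patt K` on `S`. -/
def cylSet (S K : Finset Site) : Set Omega := {ω | ∀ j ∈ S, ω j = patt K j}

/-- The indicator of `ω x = 1`. -/
noncomputable def chi (x : Site) (ω : Omega) : ℝ := if ω x then 1 else 0

lemma cylSet_measurable (S K : Finset Site) : MeasurableSet (cylSet S K) := by
  have : cylSet S K = ⋂ j ∈ (S : Set Site), {ω : Omega | ω j = patt K j} := by
    ext ω; simp [cylSet]
  rw [this]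
  refine MeasurableSet.biInter S.countable_toSet fun j _ => ?_
  have h2 : {ω : Omega | ω j = patt K j} = (fun ω : Omega => ω j) ⁻¹' {patt K j} := rfl
  rw [h2]
  exact measurable_pi_apply j (measurableSet_singleton (patt K j))

lemma measSet_coord (x : Site) (b : Bool) : MeasurableSet {ω : Omega | ω x = b} := by
  have h2 : {ω : Omega | ω x = b} = (fun ω : Omega => ω x) ⁻¹' {b} := rfl
  rw [h2]
  exact measurable_pi_apply x (measurableSet_singleton b)

lemma depOn_decomp {f : Omega → ℝ} {S : Finset Site} (hf : DepOn f S) (ω : Omega) :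
    f ω = ∑ K ∈ S.powerset, f (patt K) * Set.indicator (cylSet S K) (fun _ => (1 : ℝ)) ω := by
  classical
  set K0 : Finset Site := S.filter (fun j => ω j = true) with hK0def
  have hK0 : K0 ∈ S.powerset := Finset.mem_powerset.2 (Finset.filter_subset _ _)
  have hmem : ω ∈ cylSet S K0 := by
    intro j hj
    cases hωj : ω j <;> simp [patt, hK0def, Finset.mem_filter, hj, hωj]
  rw [Finset.sum_eq_single_of_mem K0 hK0]
  · rw [Set.indicator_of_mem hmem, mul_one]
    exact hf ω (patt K0) (fun j hj => hmem j hj)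
  · intro K hK hne
    have hω : ω ∉ cylSet S K := by
      intro hmemK
      apply hne
      have hKS : K ⊆ S := Finset.mem_powerset.1 hK
      ext j
      by_cases hj : j ∈ S
      · have h1 := hmemK j hj
        have h2 := hmem j hj
        simp only [hK0def, Finset.mem_filter]
        constructor
        · intro hjK
          refine ⟨hj, ?_⟩
          rw [h1]; simp [patt, hjK]
        · rintro ⟨-, hωj⟩
          have : patt K j = true := by rw [← h1, hωj]
          simpa [patt] using this
      · constructor
        · intro hjK; exact absurd (hKS hjK) hj
        · intro hjK0
          exact absurd (Finset.filter_subset _ _ hjK0) hj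
    rw [Set.indicator_of_notMem hω, mul_zero]

lemma DepOn.measurable' {f : Omega → ℝ} {S : Finset Site} (hf : DepOn f S) :
    Measurable f := by
  have hfe : f = fun ω => ∑ K ∈ S.powerset,
      f (patt K) * Set.indicator (cylSet S K) (fun _ => (1 : ℝ)) ω :=
    funext (depOn_decomp hf)
  rw [hfe]
  exact Finset.measurable_sum _
    (fun K _ => (measurable_const.indicator (cylSet_measurable S K)).const_mul _)

lemma DepOn.bound {f : Omega → ℝ} {S : Finset Site} (hf : DepOn f S) (ω : Omega) :
    |f ω| ≤ ∑ K ∈ S.powerset, |f (patt K)| := by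
  rw [depOn_decomp hf ω]
  refine (Finset.abs_sum_le_sum_abs _ _).trans (Finset.sum_le_sum fun K _ => ?_)
  rw [abs_mul]
  by_cases hω : ω ∈ cylSet S K
  · rw [Set.indicator_of_mem hω]; simp
  · rw [Set.indicator_of_notMem hω]; simp [abs_nonneg]

lemma DepOn.integrable {f : Omega → ℝ} {S : Finset Site} (hf : DepOn f S)
    (μ : Measure Omega) [IsProbabilityMeasure μ] : Integrable f μ :=
  ⟨hf.measurable'.aestronglyMeasurable,
    HasFiniteIntegral.of_bounded (C := ∑ K ∈ S.powerset, |f (patt K)|)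
      (ae_of_all _ fun ω => by simpa [Real.norm_eq_abs] using hf.bound ω)⟩

lemma depOn_integral {f : Omega → ℝ} {S : Finset Site} (hf : DepOn f S)
    (μ : Measure Omega) [IsProbabilityMeasure μ] :
    ∫ ω, f ω ∂μ = ∑ K ∈ S.powerset, f (patt K) * (μ (cylSet S K)).toReal := by
  have hfe : (fun ω => f ω) = fun ω => ∑ K ∈ S.powerset,
      f (patt K) * Set.indicator (cylSet S K) (fun _ => (1 : ℝ)) ω :=
    funext (depOn_decomp hf)
  rw [hfe, integral_finset_sum _ (fun K _ =>
    (((integrable_const (1 : ℝ)).indicator (cylSet_measurable S K)).const_mul _))]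
  refine Finset.sum_congr rfl fun K _ => ?_
  rw [integral_const_mul, integral_indicator_const (1 : ℝ) (cylSet_measurable S K)]
  simp [Measure.real]

lemma bern_integral {p : ℝ} (hp0 : 0 ≤ p) (hp1 : p ≤ 1) {Qp : Measure Omega}
    [IsProbabilityMeasure Qp] (hQp : IsBernoulliProduct p Qp)
    {f : Omega → ℝ} {S : Finset Site} (hf : DepOn f S) :
    ∫ ω, f ω ∂Qp = ∑ K ∈ S.powerset,
      f (patt K) * ∏ j ∈ S, (if patt K j then p else 1 - p) := by
  rw [depOn_integral hf Qp]
  refine Finset.sum_congr rfl fun K _ => ?_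
  congr 1
  have hcyl : Qp (cylSet S K) = ∏ j ∈ S, ENNReal.ofReal (if patt K j then p else 1 - p) :=
    hQp S (patt K)
  rw [hcyl, ENNReal.toReal_prod]
  refine Finset.prod_congr rfl fun j _ => ENNReal.toReal_ofReal ?_
  split <;> linarith

lemma bern_factor {p : ℝ} (hp0 : 0 ≤ p) (hp1 : p ≤ 1) {Qp : Measure Omega}
    [IsProbabilityMeasure Qp] (hQp : IsBernoulliProduct p Qp)
    {S : Finset Site} {x : Site} (hx : x ∉ S) {h : Omega → ℝ} (hh : DepOn h S) :
    ∫ ω, h ω * chi x ω ∂Qp = p * ∫ ω, h ω ∂Qp := by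
  classical
  have hdep : DepOn (fun ω => h ω * chi x ω) (insert x S) := by
    intro ω ω' hag
    have h1 : h ω = h ω' := hh ω ω' (fun j hj => hag j (Finset.mem_insert_of_mem hj))
    have h2 : chi x ω = chi x ω' := by
      unfold chi; rw [hag x (Finset.mem_insert_self x S)]
    dsimp only
    rw [h1, h2]
  rw [bern_integral hp0 hp1 hQp hdep, bern_integral hp0 hp1 hQp hh,
    Finset.sum_powerset_insert hx]
  have h1 : ∑ K ∈ S.powerset,
      (h (patt K) * chi x (patt K)) * ∏ j ∈ insert x S, (if patt K j then p else 1 - p)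
        = 0 := by
    refine Finset.sum_eq_zero fun K hK => ?_
    have hxK : x ∉ K := fun hc => hx (Finset.mem_powerset.1 hK hc)
    have : chi x (patt K) = 0 := by simp [chi, patt, hxK]
    rw [this, mul_zero, zero_mul]
  rw [h1, zero_add, Finset.mul_sum]
  refine Finset.sum_congr rfl fun K hK => ?_
  have hKS : K ⊆ S := Finset.mem_powerset.1 hK
  have e1 : h (patt (insert x K)) = h (patt K) := by
    refine hh _ _ fun j hj => ?_
    have hjx : j ≠ x := fun hc => hx (hc ▸ hj)
    simp [patt, Finset.mem_insert, hjx]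
  have e2 : chi x (patt (insert x K)) = 1 := by simp [chi, patt]
  rw [Finset.prod_insert hx]
  have e3 : (if patt (insert x K) x then p else 1 - p) = p := by simp [patt]
  have e4 : ∏ j ∈ S, (if patt (insert x K) j then p else 1 - p)
      = ∏ j ∈ S, (if patt K j then p else 1 - p) := by
    refine Finset.prod_congr rfl fun j hj => ?_
    have hjx : j ≠ x := fun hc => hx (hc ▸ hj)
    simp [patt, Finset.mem_insert, hjx]
  rw [e1, e2, e3, e4]
  ring

lemma extSigma_le : extSigma ≤ (inferInstance : MeasurableSpace Omega) := by
  have hproj : Measurable (fun (ω : Omega) (j : {j : Site // j ≠ 0}) => ω j) :=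
    measurable_pi_lambda _ fun j => measurable_pi_apply _
  exact measurable_iff_comap_le.mp hproj

lemma DepOn.stronglyMeasurable_ext {h : Omega → ℝ} {S : Finset Site}
    (hS : (0 : Site) ∉ S) (hh : DepOn h S) : StronglyMeasurable[extSigma] h := by
  classical
  let proj : Omega → ({j : Site // j ≠ 0} → Bool) := fun ω j => ω j
  let ext0 : ({j : Site // j ≠ 0} → Bool) → Omega :=
    fun u y => if hy : y = 0 then false else u ⟨y, hy⟩
  have hext0 : Measurable ext0 := by
    refine measurable_pi_lambda _ fun y => ?_
    by_cases hy : y = 0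
    · simp only [ext0, hy, dif_pos]; exact measurable_const
    · simp only [ext0, dif_neg hy]; exact measurable_pi_apply _
  have hfac : h = (h ∘ ext0) ∘ proj := by
    funext ω
    refine hh ω (ext0 (proj ω)) fun j hj => ?_
    have hj0 : j ≠ 0 := fun e => hS (e ▸ hj)
    simp [ext0, proj, dif_neg hj0]
  have hprojm : Measurable[extSigma] proj := measurable_iff_comap_le.mpr le_rfl
  rw [hfac]
  exact ((hh.measurable'.comp hext0).comp hprojm).stronglyMeasurable

lemma condBadProb_le_one (Q : Measure Omega) [IsProbabilityMeasure Q] :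
    ∀ᵐ ω ∂Q, condBadProb Q ω ≤ 1 := by
  set χ : Omega → ℝ := Set.indicator {ω : Omega | ω 0 = true} (fun _ => (1 : ℝ)) with hχ
  have hχint : Integrable χ Q := by
    exact (integrable_const (1 : ℝ)).indicator (measSet_coord 0 true)
  have hle : χ ≤ᵐ[Q] (fun _ => (1 : ℝ)) := by
    refine ae_of_all _ fun ω => ?_
    by_cases hω : ω ∈ {ω : Omega | ω 0 = true}
    · rw [hχ]; rw [Set.indicator_of_mem hω]
    · rw [hχ]; rw [Set.indicator_of_notMem hω]; norm_num
  have hmono := condExp_mono (m := extSigma) (μ := Q) hχint (integrable_const (1 : ℝ)) hle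
  rw [condExp_const extSigma_le (1 : ℝ)] at hmono
  filter_upwards [hmono] with ω hω using hω

lemma condBadProb_nonneg (Q : Measure Omega) [IsProbabilityMeasure Q] :
    ∀ᵐ ω ∂Q, 0 ≤ condBadProb Q ω := by
  have := condExp_nonneg (m := extSigma) (μ := Q)
    (f := Set.indicator {ω : Omega | ω 0 = true} (fun _ => (1 : ℝ)))
    (ae_of_all _ fun ω => Set.indicator_apply_nonneg (fun _ => zero_le_one))
  filter_upwards [this] with ω hω using hω

lemma badParam_nonneg (Q : Measure Omega) [IsProbabilityMeasure Q] : 0 ≤ badParam Q := by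
  haveI : NeBot (ae Q) := ae_neBot.mpr (IsProbabilityMeasure.ne_zero Q)
  have hb : IsBoundedUnder (· ≤ ·) (ae Q) (condBadProb Q) :=
    ⟨1, eventually_map.mpr (condBadProb_le_one Q)⟩
  exact le_limsup_of_frequently_le ((condBadProb_nonneg Q).frequently) hb

lemma badParam_le_one (Q : Measure Omega) [IsProbabilityMeasure Q] : badParam Q ≤ 1 := by
  haveI : NeBot (ae Q) := ae_neBot.mpr (IsProbabilityMeasure.ne_zero Q)
  have hcb : IsCoboundedUnder (· ≤ ·) (ae Q) (condBadProb Q) :=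
    IsBoundedUnder.isCoboundedUnder_le ⟨0, eventually_map.mpr (condBadProb_nonneg Q)⟩
  exact limsup_le_of_le hcb (condBadProb_le_one Q)

lemma cond_bound (Q : Measure Omega) [IsProbabilityMeasure Q] {S : Finset Site}
    (hS : (0 : Site) ∉ S) {h : Omega → ℝ} (hh : DepOn h S) (hpos : ∀ ω, 0 ≤ h ω) :
    ∫ ω, h ω * chi 0 ω ∂Q ≤ badParam Q * ∫ ω, h ω ∂Q := by
  classical
  set χ : Omega → ℝ := Set.indicator {ω : Omega | ω 0 = true} (fun _ => (1 : ℝ)) with hχdef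
  have hχeq : ∀ ω, chi 0 ω = χ ω := by
    intro ω
    by_cases hω : ω 0 = true
    · simp [chi, hχdef, Set.indicator_of_mem, hω, Set.mem_setOf_eq]
    · simp [chi, hχdef, Set.indicator_of_notMem, hω, Set.mem_setOf_eq]
  have hχint : Integrable χ Q := by
    exact (integrable_const (1 : ℝ)).indicator (measSet_coord 0 true)
  have hhχdep : DepOn (fun ω => h ω * chi 0 ω) (insert 0 S) := by
    intro ω ω' hag
    have h1 : h ω = h ω' := hh ω ω' (fun j hj => hag j (Finset.mem_insert_of_mem hj))
    have h2 : chi 0 ω = chi 0 ω' := by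
      unfold chi; rw [hag 0 (Finset.mem_insert_self 0 S)]
    dsimp only
    rw [h1, h2]
  have hhχint : Integrable (fun ω => h ω * chi 0 ω) Q := hhχdep.integrable Q
  have hmulint : Integrable (h * χ) Q := by
    have : h * χ = fun ω => h ω * chi 0 ω := by
      funext ω; simp [Pi.mul_apply, hχeq ω]
    rw [this]; exact hhχint
  have hsm : StronglyMeasurable[extSigma] h := hh.stronglyMeasurable_ext hS
  have hpull := condExp_mul_of_stronglyMeasurable_left (μ := Q) hsm hmulint hχint
  have hbd : IsBoundedUnder (· ≤ ·) (ae Q) (condBadProb Q) :=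
    ⟨1, eventually_map.mpr (condBadProb_le_one Q)⟩
  have hD : ∀ᵐ ω ∂Q, (Q[χ|extSigma]) ω ≤ badParam Q := ae_le_essSup hbd
  have hcondint : Integrable (Q[χ|extSigma]) Q := integrable_condExp
  have hmidint : Integrable (h * Q[χ|extSigma]) Q := by
    refine hcondint.bdd_mul (c := ∑ K ∈ S.powerset, |h (patt K)|) hh.measurable'.aestronglyMeasurable ?_
    exact ae_of_all _ fun ω => by
      simpa [Real.norm_eq_abs] using hh.bound ω
  have hrint : Integrable (fun ω => h ω * badParam Q) Q := (hh.integrable Q).mul_const _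
  calc ∫ ω, h ω * chi 0 ω ∂Q
      = ∫ ω, (h * χ) ω ∂Q := by
        refine integral_congr_ae (ae_of_all _ fun ω => ?_)
        simp [Pi.mul_apply, hχeq ω]
    _ = ∫ ω, (Q[h * χ|extSigma]) ω ∂Q := (integral_condExp extSigma_le).symm
    _ = ∫ ω, (h * Q[χ|extSigma]) ω ∂Q := integral_congr_ae hpull
    _ ≤ ∫ ω, h ω * badParam Q ∂Q := by
        refine integral_mono_ae hmidint hrint ?_
        filter_upwards [hD] with ω hω
        exact mul_le_mul_of_nonneg_left hω (hpos ω)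
    _ = badParam Q * ∫ ω, h ω ∂Q := by
        rw [integral_mul_const]; ring

lemma update_mono {ω ω' : Omega} (hle : ω ≤ ω') (a : Site) (b : Bool) :
    Function.update ω a b ≤ Function.update ω' a b := by
  intro y
  by_cases hy : y = a
  · subst hy; simp [Function.update_self]
  · simp only [Function.update_apply, if_neg hy]; exact hle y

lemma integral_comp_shift (Q : Measure Omega) [IsProbabilityMeasure Q]
    (hinv : TransInvariant Q) (v : Site) {f : Omega → ℝ} (hf : Measurable f) :
    ∫ ω, f (fun z => ω (z + v)) ∂Q = ∫ ω, f ω ∂Q := by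
  have hτ : Measurable (fun (ω : Omega) (z : Site) => ω (z + v)) :=
    measurable_pi_lambda _ fun z => measurable_pi_apply _
  conv_rhs => rw [← hinv v]
  rw [integral_map hτ.aemeasurable hf.aestronglyMeasurable]

lemma main_fin (Q Qp : Measure Omega) [IsProbabilityMeasure Q] [IsProbabilityMeasure Qp]
    (hinv : TransInvariant Q) (hQp : IsBernoulliProduct (badParam Q) Qp) :
    ∀ (S : Finset Site) (f : Omega → ℝ), DepOn f S → Monotone f →
      ∫ ω, f ω ∂Q ≤ ∫ ω, f ω ∂Qp := by
  classical
  set p : ℝ := badParam Q with hpdef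
  have hp0 : 0 ≤ p := badParam_nonneg Q
  have hp1 : p ≤ 1 := badParam_le_one Q
  intro S
  induction S using Finset.induction_on with
  | empty =>
    intro f hf _
    have hfc : f = fun _ => f (fun _ => false) :=
      funext fun ω => hf ω (fun _ => false) (fun j hj => absurd hj (Finset.notMem_empty j))
    rw [hfc]
    simp
  | @insert x s hx ih =>
    intro f hf hmono
    set v : Site := -x with hvdef
    have hzv : ∀ z : Site, z + v = 0 ↔ z = x := by
      intro z; rw [hvdef]; constructor
      · intro hz; have := congrArg (· + x) hz; simpa using this
      · intro hz; simp [hz]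
    -- shifted function
    set τ : Omega → Omega := fun ω z => ω (z + v) with hτdef
    have hτmono : Monotone τ := fun ω ω' hle z => hle (z + v)
    set fh : Omega → ℝ := fun ω => f (τ ω) with hfhdef
    have hfhmono : Monotone fh := fun ω ω' hle => hmono (hτmono hle)
    set s' : Finset Site := s.image (fun z => z + v) with hs'def
    have h0s' : (0 : Site) ∉ s' := by
      rw [hs'def]
      simp only [Finset.mem_image, not_exists]
      intro z hz
      exact hx (((hzv z).mp hz.2) ▸ hz.1)
    have hfhdep : DepOn fh (insert 0 s') := by
      intro ω ω' hag
      refine hf (τ ω) (τ ω') fun j hj => ?_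
      rcases Finset.mem_insert.mp hj with hjx | hjs
      · have h0 : j + v = 0 := (hzv j).mpr hjx
        exact hag (j + v) (by rw [h0]; exact Finset.mem_insert_self 0 s')
      · exact hag (j + v) (Finset.mem_insert_of_mem (Finset.mem_image_of_mem _ hjs))
    -- hatted pieces
    set G0 : Omega → ℝ := fun ω => fh (Function.update ω 0 false) with hG0def
    set G1 : Omega → ℝ := fun ω => fh (Function.update ω 0 true) with hG1def
    have hGdep : ∀ b : Bool, DepOn (fun ω => fh (Function.update ω 0 b)) s' := by
      intro b ω ω' hag
      refine hfhdep _ _ fun j hj => ?_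
      rcases Finset.mem_insert.mp hj with hj0 | hjs
      · subst hj0; simp [Function.update_self]
      · have hj0 : j ≠ 0 := fun hc => h0s' (hc ▸ hjs)
        simp only [Function.update_apply, if_neg hj0]
        exact hag j hjs
    have hG0dep : DepOn G0 s' := hGdep false
    have hG1dep : DepOn G1 s' := hGdep true
    have hG01 : ∀ ω, G0 ω ≤ G1 ω := by
      intro ω
      refine hfhmono ?_
      intro y
      by_cases hy : y = 0
      · subst hy; simp [Function.update_self]
      · simp [Function.update_apply, if_neg hy, le_refl]
    have hid : ∀ ω, fh ω = G0 ω + (G1 ω - G0 ω) * chi 0 ω := by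
      intro ω
      have hupd : Function.update ω 0 (ω 0) = ω := Function.update_eq_self 0 ω
      cases hω : ω 0
      · have : Function.update ω 0 false = ω := by rw [← hω]; exact hupd
        simp [chi, hω, hG0def, this]
      · have : Function.update ω 0 true = ω := by rw [← hω]; exact hupd
        simp [chi, hω, hG1def, this]
    set h : Omega → ℝ := fun ω => G1 ω - G0 ω with hhdef
    have hhdep : DepOn h s' := by
      intro ω ω' hag; simp only [hhdef, hG1dep ω ω' hag, hG0dep ω ω' hag]
    have hhpos : ∀ ω, 0 ≤ h ω := fun ω => sub_nonneg.mpr (hG01 ω)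
    -- original pieces
    set F0 : Omega → ℝ := fun ω => f (Function.update ω x false) with hF0def
    set F1 : Omega → ℝ := fun ω => f (Function.update ω x true) with hF1def
    have hFdep : ∀ b : Bool, DepOn (fun ω => f (Function.update ω x b)) s := by
      intro b ω ω' hag
      refine hf _ _ fun j hj => ?_
      rcases Finset.mem_insert.mp hj with hjx | hjs
      · subst hjx; simp [Function.update_self]
      · have hjx : j ≠ x := fun hc => hx (hc ▸ hjs)
        simp only [Function.update_apply, if_neg hjx]
        exact hag j hjs
    have hF0dep : DepOn F0 s := hFdep false
    have hF1dep : DepOn F1 s := hFdep true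
    have hF01 : ∀ ω, F0 ω ≤ F1 ω := by
      intro ω
      refine hmono ?_
      intro y
      by_cases hy : y = x
      · subst hy; simp [Function.update_self]
      · simp [Function.update_apply, if_neg hy, le_refl]
    have hFmono : ∀ b : Bool, Monotone (fun ω => f (Function.update ω x b)) :=
      fun b ω ω' hle => hmono (update_mono hle x b)
    -- the conditional-expectation-averaged function
    set g : Omega → ℝ := fun ω => (1 - p) * F0 ω + p * F1 ω with hgdef
    have hgdep : DepOn g s := by
      intro ω ω' hag
      simp only [hgdef, hF0dep ω ω' hag, hF1dep ω ω' hag]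
    have hgmono : Monotone g := by
      intro ω ω' hle
      have h0 := hFmono false hle
      have h1 := hFmono true hle
      simp only [hgdef]
      have : (1 - p) * F0 ω ≤ (1 - p) * F0 ω' :=
        mul_le_mul_of_nonneg_left h0 (by linarith)
      have h1' : p * F1 ω ≤ p * F1 ω' := mul_le_mul_of_nonneg_left h1 hp0
      linarith
    -- relation between hatted and unhatted pieces
    have hcomm : ∀ (ω : Omega) (b : Bool),
        τ (Function.update ω 0 b) = Function.update (τ ω) x b := by
      intro ω b
      funext z
      simp only [hτdef, Function.update_apply]
      by_cases hz : z + v = 0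
      · rw [if_pos hz, if_pos ((hzv z).mp hz)]
      · rw [if_neg hz, if_neg (fun hc : z = x => hz ((hzv z).mpr hc))]
    have hGF : ∀ (ω : Omega), G0 ω = F0 (τ ω) ∧ G1 ω = F1 (τ ω) := by
      intro ω
      constructor
      · simp only [hG0def, hfhdef, hF0def, hcomm ω false]
      · simp only [hG1def, hfhdef, hF1def, hcomm ω true]
    -- integrability over Q
    have hfint : Integrable f Q := hf.integrable Q
    have hG0int : Integrable G0 Q := hG0dep.integrable Q
    have hG1int : Integrable G1 Q := hG1dep.integrable Q
    have hhchidep : DepOn (fun ω => h ω * chi 0 ω) (insert 0 s') := by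
      intro ω ω' hag
      have h1 : h ω = h ω' := hhdep ω ω' (fun j hj => hag j (Finset.mem_insert_of_mem hj))
      have h2 : chi 0 ω = chi 0 ω' := by
        unfold chi; rw [hag 0 (Finset.mem_insert_self 0 s')]
      dsimp only
      rw [h1, h2]
    have hhchiint : Integrable (fun ω => h ω * chi 0 ω) Q := hhchidep.integrable Q
    -- Step: ∫ f dQ = ∫ fh dQ
    have step1 : ∫ ω, f ω ∂Q = ∫ ω, fh ω ∂Q :=
      (integral_comp_shift Q hinv v hf.measurable').symm
    -- Step: ∫ fh dQ = ∫ G0 + ∫ h·χ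
    have step2 : ∫ ω, fh ω ∂Q = ∫ ω, G0 ω ∂Q + ∫ ω, h ω * chi 0 ω ∂Q := by
      have : (fun ω => fh ω) = fun ω => G0 ω + h ω * chi 0 ω := funext fun ω => hid ω
      rw [this, integral_add hG0int hhchiint]
    -- Step: conditional bound
    have step3 : ∫ ω, h ω * chi 0 ω ∂Q ≤ p * ∫ ω, h ω ∂Q :=
      cond_bound Q h0s' hhdep hhpos
    have hhint : Integrable h Q := hhdep.integrable Q
    have hint_sub : ∫ ω, h ω ∂Q = ∫ ω, G1 ω ∂Q - ∫ ω, G0 ω ∂Q := by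
      simp only [hhdef]
      exact integral_sub hG1int hG0int
    -- Step: combine into ∫ gh dQ
    set gh : Omega → ℝ := fun ω => (1 - p) * G0 ω + p * G1 ω with hghdef
    have hghint : ∫ ω, gh ω ∂Q = (1 - p) * ∫ ω, G0 ω ∂Q + p * ∫ ω, G1 ω ∂Q := by
      rw [hghdef]
      rw [integral_add (hG0int.const_mul _) (hG1int.const_mul _),
        integral_const_mul, integral_const_mul]
    have step4 : ∫ ω, f ω ∂Q ≤ ∫ ω, gh ω ∂Q := by
      rw [step1, step2, hghint]
      have := step3
      rw [hint_sub] at this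
      linarith
    -- Step: ∫ gh dQ = ∫ g dQ
    have step5 : ∫ ω, gh ω ∂Q = ∫ ω, g ω ∂Q := by
      have hghg : gh = fun ω => g (τ ω) := by
        funext ω
        rcases hGF ω with ⟨e0, e1⟩
        simp only [hghdef, hgdef, e0, e1]
      rw [hghg]
      exact integral_comp_shift Q hinv v hgdep.measurable'
    -- Step: induction
    have step6 : ∫ ω, g ω ∂Q ≤ ∫ ω, g ω ∂Qp := ih g hgdep hgmono
    -- Step: ∫ g dQp = ∫ f dQp
    have hidf : ∀ ω, f ω = F0 ω + (F1 ω - F0 ω) * chi x ω := by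
      intro ω
      have hupd : Function.update ω x (ω x) = ω := Function.update_eq_self x ω
      cases hω : ω x
      · have : Function.update ω x false = ω := by rw [← hω]; exact hupd
        simp [chi, hω, hF0def, this]
      · have : Function.update ω x true = ω := by rw [← hω]; exact hupd
        simp [chi, hω, hF1def, this]
    have hFsubdep : DepOn (fun ω => F1 ω - F0 ω) s := by
      intro ω ω' hag; simp only [hF1dep ω ω' hag, hF0dep ω ω' hag]
    have hF0intp : Integrable F0 Qp := hF0dep.integrable Qp
    have hF1intp : Integrable F1 Qp := hF1dep.integrable Qp
    have hFsubchidep : DepOn (fun ω => (F1 ω - F0 ω) * chi x ω) (insert x s) := by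
      intro ω ω' hag
      have h1 := hFsubdep ω ω' (fun j hj => hag j (Finset.mem_insert_of_mem hj))
      have h2 : chi x ω = chi x ω' := by
        unfold chi; rw [hag x (Finset.mem_insert_self x s)]
      simp only at h1
      dsimp only
      rw [h1, h2]
    have step7 : ∫ ω, g ω ∂Qp = ∫ ω, f ω ∂Qp := by
      have hfp : (fun ω => f ω) = fun ω => F0 ω + (F1 ω - F0 ω) * chi x ω :=
        funext fun ω => hidf ω
      have hfac : ∫ ω, (F1 ω - F0 ω) * chi x ω ∂Qp = p * ∫ ω, (F1 ω - F0 ω) ∂Qp :=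
        bern_factor hp0 hp1 hQp hx hFsubdep
      rw [hfp, integral_add hF0intp (hFsubchidep.integrable Qp), hfac,
        integral_sub hF1intp hF0intp]
      have : ∫ ω, g ω ∂Qp = (1 - p) * ∫ ω, F0 ω ∂Qp + p * ∫ ω, F1 ω ∂Qp := by
        rw [hgdef]
        rw [integral_add (hF0intp.const_mul _) (hF1intp.const_mul _),
          integral_const_mul, integral_const_mul]
      rw [this]
      ring
    calc ∫ ω, f ω ∂Q ≤ ∫ ω, gh ω ∂Q := step4
      _ = ∫ ω, g ω ∂Q := step5
      _ ≤ ∫ ω, g ω ∂Qp := step6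
      _ = ∫ ω, f ω ∂Qp := step7

end StochDomAux

/-- Stochastic domination by a Bernoulli field.  If `Q` is a translation-
invariant probability measure on `Ω` with badness parameter `p`, and `Q_p` is the
Bernoulli product measure with `Q_p(ω_x = 1) = p`, then `Q ≤ Q_p` stochastically: for
every bounded continuous increasing `f : Ω → ℝ`, `∫ f dQ ≤ ∫ f dQ_p`. -/
theorem stochastic_domination (Q Qp : Measure Omega)
    [IsProbabilityMeasure Q] [IsProbabilityMeasure Qp]
    (hinv : TransInvariant Q) (hQp : IsBernoulliProduct (badParam Q) Qp)
    (f : Omega → ℝ) (hcont : Continuous f) (hbdd : ∃ M : ℝ, ∀ ω, |f ω| ≤ M)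
    (hmono : Monotone f) :
    ∫ ω, f ω ∂Q ≤ ∫ ω, f ω ∂Qp := by
  classical
  obtain ⟨M, hM⟩ := hbdd
  have hfmeas : Measurable f := hcont.measurable
  let e : ℕ ≃ Site := (Denumerable.eqv Site).symm
  let Λ : ℕ → Finset Site := fun n => (Finset.range n).image e
  let pr : ℕ → Omega → Omega := fun n ω y => if y ∈ Λ n then ω y else false
  let F : ℕ → Omega → ℝ := fun n ω => f (pr n ω)
  have hdep : ∀ n, DepOn (F n) (Λ n) := by
    intro n ω ω' hag
    have : pr n ω = pr n ω' := by
      funext y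
      by_cases hy : y ∈ Λ n
      · simp only [pr, if_pos hy]; exact hag y hy
      · simp only [pr, if_neg hy]
    simp only [F, this]
  have hmonon : ∀ n, Monotone (F n) := by
    intro n ω ω' hle
    refine hmono fun y => ?_
    by_cases hy : y ∈ Λ n
    · simp only [pr, if_pos hy]; exact hle y
    · simp only [pr, if_neg hy]; exact le_refl _
  have hlef : ∀ n ω, F n ω ≤ f ω := by
    intro n ω
    refine hmono fun y => ?_
    by_cases hy : y ∈ Λ n
    · simp only [pr, if_pos hy]; exact le_refl _
    · simp only [pr, if_neg hy]; exact Bool.false_le _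
  have hfintQp : Integrable f Qp :=
    ⟨hfmeas.aestronglyMeasurable,
      HasFiniteIntegral.of_bounded (C := M)
        (ae_of_all _ fun ω => by simpa [Real.norm_eq_abs] using hM ω)⟩
  have hstep : ∀ n, ∫ ω, F n ω ∂Q ≤ ∫ ω, f ω ∂Qp := by
    intro n
    refine (main_fin Q Qp hinv hQp (Λ n) (F n) (hdep n) (hmonon n)).trans ?_
    exact integral_mono ((hdep n).integrable Qp) hfintQp (fun ω => hlef n ω)
  have htend : Filter.Tendsto (fun n => ∫ ω, F n ω ∂Q) Filter.atTop (nhds (∫ ω, f ω ∂Q)) := by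
    refine MeasureTheory.tendsto_integral_of_dominated_convergence (fun _ => M)
      (fun n => ((hdep n).measurable').aestronglyMeasurable)
      (integrable_const M)
      (fun n => ae_of_all _ fun ω => by simpa [Real.norm_eq_abs] using hM (pr n ω))
      (ae_of_all _ fun ω => ?_)
    have hpr : Filter.Tendsto (fun n => pr n ω) Filter.atTop (nhds ω) := by
      rw [tendsto_pi_nhds]
      intro y
      have hev : ∀ᶠ n in Filter.atTop, pr n ω y = ω y := by
        rw [Filter.eventually_atTop]
        refine ⟨e.symm y + 1, fun n hn => ?_⟩
        have hy : y ∈ Λ n := by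
          refine Finset.mem_image.mpr ⟨e.symm y, ?_, by simp⟩
          exact Finset.mem_range.mpr (Nat.lt_of_succ_le hn)
        simp only [pr, if_pos hy]
      exact Filter.Tendsto.congr' (Filter.EventuallyEq.symm hev) tendsto_const_nhds
    exact (hcont.tendsto ω).comp hpr
  exact le_of_tendsto htend (Filter.Eventually.of_forall hstep)
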